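/- The contracted semigroup algebra ℚ₀T¹ has the hyperbolic property: for every ℤ-order Γ in ℚ₀T¹, the unit group Γˣ contains no subgroup isomorphic to ℤ × ℤ. -/

import Mathlib

/-- The four-element monoid `T¹ = {1, e, f, θ}` with `θ` an absorbing zero,
`e² = e`, `f² = f`, `ef = f`, `fe = e`. -/
inductive T1 : Type
  | one : T1
  | e : T1
  | f : T1
  | theta : T1
deriving DecidableEq

instance instFintypeT1 : Fintype T1 where
  elems := {.one, .e, .f, .theta}
  complete := fun x => by cases x <;> decide

instance : Monoid T1 where
  one := .one
  mul x y :=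
    match x, y with
    | .one, y => y
    | x, .one => x
    | .theta, _ => .theta
    | _, .theta => .theta
    | _, .e => .e
    | _, .f => .f
  mul_assoc := by decide
  one_mul := by decide
  mul_one := by decide

/-- The contracted semigroup algebra `ℚ₀T¹`: the quotient of the monoid algebra
`ℚ[T¹]` by the two-sided ideal spanned by `θ`. -/
noncomputable abbrev Q0T1 : Type :=
  (TwoSidedIdeal.span {MonoidAlgebra.single T1.theta (1 : ℚ)}).ringCon.Quotient

/-- The `ℚ`-algebra structure on the quotient of a `ℚ`-algebra by a two-sided ideal. -/
noncomputable instance quotAlgebra {A : Type*} [Ring A] [Algebra ℚ A]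
    (I : TwoSidedIdeal A) : Algebra ℚ I.ringCon.Quotient :=
  RingHom.toAlgebra'
    ((I.ringCon.mk' : A →+* I.ringCon.Quotient).comp (algebraMap ℚ A))
    (fun q x => Quotient.inductionOn' x fun a => by
      show (I.ringCon.mk' (algebraMap ℚ A q)) * I.ringCon.mk' a
          = I.ringCon.mk' a * I.ringCon.mk' (algebraMap ℚ A q)
      rw [← map_mul, ← map_mul, Algebra.commutes])


noncomputable section

def T1.mat : T1 → Matrix (Fin 2) (Fin 2) ℚ
  | .one => 1
  | .e => !![0,0;1,1]
  | .f => !![0,0;0,1]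
  | .theta => 0

lemma T1.mat_mul (x y : T1) : T1.mat (x * y) = T1.mat x * T1.mat y := by
  cases x <;> cases y <;>
    simp [T1.mat, show ∀ a b : T1, a * b = (match a, b with
      | .one, y => y
      | x, .one => x
      | .theta, _ => .theta
      | _, .theta => .theta
      | _, .e => .e
      | _, .f => .f : T1) from fun _ _ => rfl] <;>
    ext i j <;> fin_cases i <;> fin_cases j <;>
    simp [Matrix.mul_apply, Fin.sum_univ_two]

def rho : T1 →* Matrix (Fin 2) (Fin 2) ℚ where
  toFun := T1.mat
  map_one' := rfl
  map_mul' := T1.mat_mul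

def phi : MonoidAlgebra ℚ T1 →ₐ[ℚ] Matrix (Fin 2) (Fin 2) ℚ :=
  MonoidAlgebra.lift ℚ _ T1 rho

lemma phi_entries (x : MonoidAlgebra ℚ T1) :
    phi x 0 1 = 0 ∧ phi x 0 0 = x.coeff T1.one ∧ phi x 1 0 = x.coeff T1.e ∧
      phi x 1 1 = x.coeff T1.one + x.coeff T1.e + x.coeff T1.f := by
  induction x using MonoidAlgebra.induction_linear with
  | zero => simp [phi]
  | add p q hp hq =>
      simp only [map_add, Matrix.add_apply, MonoidAlgebra.coeff_add, Finsupp.add_apply, hp.1, hp.2.1, hp.2.2.1, hp.2.2.2,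
        hq.1, hq.2.1, hq.2.2.1, hq.2.2.2]
      refine ⟨by ring, trivial, trivial, by ring⟩
  | single t r =>
      have h : phi (MonoidAlgebra.single t r) = r • rho t := MonoidAlgebra.lift_single _ _ _
      cases t <;>
        simp [h, show ∀ t, rho t = T1.mat t from fun _ => rfl, T1.mat, MonoidAlgebra.coeff_single, Finsupp.single_apply, Matrix.one_apply]

abbrev Ith : TwoSidedIdeal (MonoidAlgebra ℚ T1) :=
  TwoSidedIdeal.span {MonoidAlgebra.single T1.theta (1 : ℚ)}

lemma phi_of_mem {x : MonoidAlgebra ℚ T1} (hx : x ∈ Ith) : phi x = 0 := by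
  have h := TwoSidedIdeal.mem_span_iff.mp hx (TwoSidedIdeal.ker (phi.toRingHom : MonoidAlgebra ℚ T1 →+* Matrix (Fin 2) (Fin 2) ℚ))
  refine (TwoSidedIdeal.mem_ker _).mp (h ?_)
  intro y hy
  rw [Set.mem_singleton_iff] at hy
  subst hy
  rw [SetLike.mem_coe, TwoSidedIdeal.mem_ker]
  have h2 : phi (MonoidAlgebra.single T1.theta (1:ℚ)) = (1:ℚ) • rho T1.theta :=
    MonoidAlgebra.lift_single _ _ _
  show phi (MonoidAlgebra.single T1.theta (1:ℚ)) = 0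
  rw [h2]
  simp [show ∀ t, rho t = T1.mat t from fun _ => rfl, T1.mat]

lemma mem_of_phi_eq_zero {x : MonoidAlgebra ℚ T1} (hx : phi x = 0) : x ∈ Ith := by
  obtain ⟨h01, h00, h10, h11⟩ := phi_entries x
  rw [hx] at h00 h10 h11
  simp only [Matrix.zero_apply] at h00 h10 h11
  have hx4 : x = x.coeff T1.theta • MonoidAlgebra.single T1.theta (1:ℚ) := by
    ext t
    cases t <;> simp [Finsupp.single_apply, ← h00, ← h10] <;> linarith
  rw [hx4, Algebra.smul_def]
  exact Ith.mul_mem_left _ _ (TwoSidedIdeal.subset_span rfl)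

def Phi : Q0T1 →+* Matrix (Fin 2) (Fin 2) ℚ where
  toFun x := Quotient.liftOn' x phi (fun a b h => by
    have hmem : a - b ∈ Ith := (TwoSidedIdeal.rel_iff _ _ _).mp h
    have h0 := phi_of_mem hmem
    rw [map_sub, sub_eq_zero] at h0
    exact h0)
  map_one' := map_one phi
  map_mul' x y := Quotient.inductionOn₂' x y fun a b => map_mul phi a b
  map_zero' := map_zero phi
  map_add' x y := Quotient.inductionOn₂' x y fun a b => map_add phi a b

lemma Phi_inj : Function.Injective Phi := by
  intro x y h
  induction x using Quotient.inductionOn' with | h a =>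
  induction y using Quotient.inductionOn' with | h b =>
  apply Quotient.sound'
  show Ith.ringCon a b
  rw [TwoSidedIdeal.rel_iff]
  apply mem_of_phi_eq_zero
  rw [map_sub, sub_eq_zero]
  exact h

lemma Phi01 (x : Q0T1) : Phi x 0 1 = 0 := by
  induction x using Quotient.inductionOn' with | h a => exact (phi_entries a).1

lemma Phi_mul00 (x y : Q0T1) : Phi (x*y) 0 0 = Phi x 0 0 * Phi y 0 0 := by
  rw [map_mul, Matrix.mul_apply, Fin.sum_univ_two, Phi01 x, zero_mul, add_zero]

lemma Phi_mul11 (x y : Q0T1) : Phi (x*y) 1 1 = Phi x 1 1 * Phi y 1 1 := by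
  rw [map_mul, Matrix.mul_apply, Fin.sum_univ_two, Phi01 y, mul_zero, zero_add]

lemma Phi_mul10 (x y : Q0T1) :
    Phi (x*y) 1 0 = Phi x 1 0 * Phi y 0 0 + Phi x 1 1 * Phi y 1 0 := by
  rw [map_mul, Matrix.mul_apply, Fin.sum_univ_two]

lemma Phi_one00 : Phi 1 0 0 = 1 := by rw [map_one]; simp [Matrix.one_apply]
lemma Phi_one11 : Phi 1 1 1 = 1 := by rw [map_one]; simp [Matrix.one_apply]

lemma rat_den_mul (q : ℚ) : (q.den : ℚ) * q = (q.num : ℚ) :=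
  Rat.den_mul_eq_num q

lemma fg_bounded (H : AddSubgroup ℚ) (hH : H.FG) :
    ∃ D : ℕ, 0 < D ∧ ∀ x ∈ H, ∃ k : ℤ, (D : ℚ) * x = (k : ℚ) := by
  obtain ⟨S, hS⟩ := hH
  set D : ℕ := ∏ q ∈ S, q.den with hD
  have hDpos : 0 < D := Finset.prod_pos fun q _ => q.pos
  refine ⟨D, hDpos, ?_⟩
  let K : AddSubgroup ℚ :=
    { carrier := {x | ∃ k : ℤ, (D : ℚ) * x = (k : ℚ)}
      zero_mem' := ⟨0, by simp⟩
      add_mem' := fun {a b} ha hb => by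
        obtain ⟨k, hk⟩ := ha; obtain ⟨l, hl⟩ := hb
        exact ⟨k + l, by push_cast; rw [mul_add, hk, hl]⟩
      neg_mem' := fun {a} ha => by
        obtain ⟨k, hk⟩ := ha
        exact ⟨-k, by push_cast; rw [mul_neg, hk]⟩ }
  have hle : H ≤ K := by
    rw [← hS, AddSubgroup.closure_le]
    intro q hq
    obtain ⟨m, hm⟩ : q.den ∣ D := Finset.dvd_prod_of_mem Rat.den hq
    refine ⟨(m : ℤ) * q.num, ?_⟩
    push_cast [hm]
    rw [mul_comm (q.den : ℚ) (m : ℚ), mul_assoc, rat_den_mul]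
  exact fun x hx => hle hx

lemma den_one_of_pow (D : ℕ) (hD : 0 < D) (a : ℚ)
    (ha : ∀ n : ℕ, ∃ k : ℤ, (D : ℚ) * a ^ n = (k : ℚ)) : a.den = 1 := by
  by_contra hden
  have h2 : 2 ≤ a.den := by
    have := a.pos
    omega
  have key : ∀ n : ℕ, ((a ^ n).den : ℤ) ∣ (D : ℤ) := by
    intro n
    obtain ⟨k, hk⟩ := ha n
    have hDne : (D : ℚ) ≠ 0 := by positivity
    have hane : a ^ n = (k : ℚ) / ((D : ℤ) : ℚ) := by
      push_cast
      rw [← hk]; field_simp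
    have hdvd := Rat.den_dvd k (D : ℤ)
    rw [Rat.divInt_eq_div, ← hane] at hdvd
    exact_mod_cast hdvd
  have key2 : a.den ^ D ∣ D := by
    have := key D
    rw [Rat.den_pow] at this
    exact_mod_cast this
  have h3 : a.den ^ D ≤ D := Nat.le_of_dvd hD key2
  have h4 : 2 ^ D ≤ a.den ^ D := Nat.pow_le_pow_left h2 D
  have h5 : D < 2 ^ D := Nat.lt_two_pow_self
  omega

lemma unit_entry_pm_one (D : ℕ) (hD : 0 < D) (a b : ℚ) (hab : a * b = 1)
    (ha : ∀ n : ℕ, ∃ k : ℤ, (D : ℚ) * a ^ n = (k : ℚ))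
    (hb : ∀ n : ℕ, ∃ k : ℤ, (D : ℚ) * b ^ n = (k : ℚ)) : a = 1 ∨ a = -1 := by
  have haz : (a.num : ℚ) = a := (Rat.den_eq_one_iff a).mp (den_one_of_pow D hD a ha)
  have hbz : (b.num : ℚ) = b := (Rat.den_eq_one_iff b).mp (den_one_of_pow D hD b hb)
  have hmul : a.num * b.num = 1 := by
    have : ((a.num * b.num : ℤ) : ℚ) = ((1 : ℤ) : ℚ) := by push_cast [haz, hbz]; rw [hab]
    exact_mod_cast this
  rcases Int.isUnit_iff.mp (IsUnit.of_mul_eq_one _ hmul) with h1 | h1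
  · left; rw [← haz, h1]; norm_num
  · right; rw [← haz, h1]; norm_num

def entHom (i j : Fin 2) : Q0T1 →+ ℚ where
  toFun x := Phi x i j
  map_zero' := by simp
  map_add' x y := by simp

end

/-- A `ℤ`-order in a finite-dimensional `ℚ`-algebra `A`. -/
def IsZOrder (A : Type*) [Ring A] [Algebra ℚ A] (Γ : Subring A) : Prop :=
  Γ.toAddSubgroup.FG ∧ Submodule.span ℚ (Γ : Set A) = ⊤

/-- A group `G` contains a subgroup isomorphic to `ℤ × ℤ`. -/
def HasZxZ (G : Type*) [Group G] : Prop :=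
  ∃ f : Multiplicative (ℤ × ℤ) →* G, Function.Injective f

/-- The hyperbolic property: no `ℤ`-order of `A` has a unit group containing `ℤ × ℤ`. -/
def HasHyperbolicProperty (A : Type*) [Ring A] [Algebra ℚ A] : Prop :=
  ∀ Γ : Subring A, IsZOrder A Γ → ¬ HasZxZ Γˣ

theorem Q0T1_hyperbolic : HasHyperbolicProperty Q0T1 := by
  rintro Γ ⟨hfg, -⟩ ⟨f, hf⟩
  classical
  have himg : ∀ i j : Fin 2, (Γ.toAddSubgroup.map (entHom i j)).FG := by
    intro i j
    obtain ⟨S, hS⟩ := hfg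
    rw [AddSubgroup.fg_iff]
    refine ⟨(entHom i j) '' S, ?_, S.finite_toSet.image _⟩
    rw [← hS, AddMonoidHom.map_closure]
  obtain ⟨D0, hD0pos, hD0⟩ := fg_bounded _ (himg 0 0)
  obtain ⟨D1, hD1pos, hD1⟩ := fg_bounded _ (himg 1 1)
  have hmem : ∀ (w : Γˣ) (i j : Fin 2),
      Phi ((w : Γ) : Q0T1) i j ∈ Γ.toAddSubgroup.map (entHom i j) :=
    fun w i j => ⟨((w : Γ) : Q0T1), (w : Γ).2, rfl⟩
  -- diagonal entries of units are ±1
  have main_pm : ∀ (i : Fin 2) (D : ℕ), 0 < D →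
      (∀ x ∈ Γ.toAddSubgroup.map (entHom i i), ∃ k : ℤ, (D : ℚ) * x = (k : ℚ)) →
      (∀ x y : Q0T1, Phi (x * y) i i = Phi x i i * Phi y i i) →
      Phi 1 i i = 1 →
      ∀ w : Γˣ, Phi ((w : Γ) : Q0T1) i i = 1 ∨ Phi ((w : Γ) : Q0T1) i i = -1 := by
    intro i D hD hDall hmul h1 w
    have hpow : ∀ (v : Γˣ) (n : ℕ),
        Phi (((v ^ n : Γˣ) : Γ) : Q0T1) i i = (Phi ((v : Γ) : Q0T1) i i) ^ n := by
      intro v n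
      induction n with
      | zero =>
          rw [pow_zero, pow_zero]
          exact h1
      | succ n ih =>
          have hc : (((v ^ n * v : Γˣ) : Γ) : Q0T1)
              = (((v ^ n : Γˣ) : Γ) : Q0T1) * ((v : Γ) : Q0T1) := rfl
          rw [pow_succ, hc, hmul, ih, pow_succ]
    refine unit_entry_pm_one D hD _ (Phi (((w⁻¹ : Γˣ) : Γ) : Q0T1) i i) ?_ ?_ ?_
    · rw [← hmul]
      have hc : ((w : Γ) : Q0T1) * (((w⁻¹ : Γˣ) : Γ) : Q0T1)
          = (((w * w⁻¹ : Γˣ) : Γ) : Q0T1) := rfl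
      rw [hc, mul_inv_cancel]
      exact h1
    · intro n
      obtain ⟨k, hk⟩ := hDall _ (hmem (w ^ n) i i)
      rw [hpow w n] at hk
      exact ⟨k, hk⟩
    · intro n
      obtain ⟨k, hk⟩ := hDall _ (hmem (w⁻¹ ^ n) i i)
      rw [hpow w⁻¹ n] at hk
      exact ⟨k, hk⟩
  have hpm00 := main_pm 0 D0 hD0pos hD0 Phi_mul00 Phi_one00
  have hpm11 := main_pm 1 D1 hD1pos hD1 Phi_mul11 Phi_one11
  -- coercion for products of values of f
  have hcoe : ∀ p q : ℤ × ℤ,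
      (((f (Multiplicative.ofAdd (p + q)) : Γˣ) : Γ) : Q0T1)
        = (((f (Multiplicative.ofAdd p) : Γˣ) : Γ) : Q0T1)
          * (((f (Multiplicative.ofAdd q) : Γˣ) : Γ) : Q0T1) := by
    intro p q
    have : f (Multiplicative.ofAdd (p + q))
        = f (Multiplicative.ofAdd p) * f (Multiplicative.ofAdd q) := by
      rw [← map_mul]; rfl
    rw [this]; rfl
  -- diagonal entries at doubled arguments equal 1
  have hA1 : ∀ p : ℤ × ℤ,
      Phi (((f (Multiplicative.ofAdd (p + p)) : Γˣ) : Γ) : Q0T1) 0 0 = 1 := by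
    intro p
    rw [hcoe p p, Phi_mul00]
    rcases hpm00 (f (Multiplicative.ofAdd p)) with h | h <;> rw [h] <;> norm_num
  have hd1 : ∀ p : ℤ × ℤ,
      Phi (((f (Multiplicative.ofAdd (p + p)) : Γˣ) : Γ) : Q0T1) 1 1 = 1 := by
    intro p
    rw [hcoe p p, Phi_mul11]
    rcases hpm11 (f (Multiplicative.ofAdd p)) with h | h <;> rw [h] <;> norm_num
  -- the (1,0) entry at doubled arguments is additive
  have hBadd : ∀ p q : ℤ × ℤ,
      Phi (((f (Multiplicative.ofAdd ((p + q) + (p + q))) : Γˣ) : Γ) : Q0T1) 1 0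
        = Phi (((f (Multiplicative.ofAdd (p + p)) : Γˣ) : Γ) : Q0T1) 1 0
          + Phi (((f (Multiplicative.ofAdd (q + q)) : Γˣ) : Γ) : Q0T1) 1 0 := by
    intro p q
    have hre : (p + q) + (p + q) = (p + p) + (q + q) := by abel
    rw [hre, hcoe (p + p) (q + q), Phi_mul10, hA1, hd1, mul_one, one_mul, add_comm]
  let Ψ : ℤ × ℤ →+ ℚ := AddMonoidHom.mk'
    (fun p => Phi (((f (Multiplicative.ofAdd (p + p)) : Γˣ) : Γ) : Q0T1) 1 0) hBadd
  have hΨapp : ∀ p : ℤ × ℤ,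
      Ψ p = Phi (((f (Multiplicative.ofAdd (p + p)) : Γˣ) : Γ) : Q0T1) 1 0 := fun _ => rfl
  have hΨinj : Function.Injective Ψ := by
    intro p q h
    rw [hΨapp, hΨapp] at h
    have hm : Phi (((f (Multiplicative.ofAdd (p + p)) : Γˣ) : Γ) : Q0T1)
        = Phi (((f (Multiplicative.ofAdd (q + q)) : Γˣ) : Γ) : Q0T1) := by
      ext i j
      fin_cases i <;> fin_cases j
      · exact (hA1 p).trans (hA1 q).symm
      · exact (Phi01 _).trans (Phi01 _).symm
      · exact h
      · exact (hd1 p).trans (hd1 q).symm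
    have h2 := Phi_inj hm
    have h3 : f (Multiplicative.ofAdd (p + p)) = f (Multiplicative.ofAdd (q + q)) :=
      Units.ext (Subtype.ext h2)
    have h4 := hf h3
    have h5 : p + p = q + q := h4
    have h6 : p.1 + p.1 = q.1 + q.1 := congrArg Prod.fst h5
    have h7 : p.2 + p.2 = q.2 + q.2 := congrArg Prod.snd h5
    obtain ⟨p1, p2⟩ := p
    obtain ⟨q1, q2⟩ := q
    simp only [Prod.mk.injEq]
    constructor <;> omega
  -- final contradiction: an injective additive map ℤ × ℤ →+ ℚ cannot exist
  set P : ℚ := Ψ (1, 0) with hPdef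
  set Q : ℚ := Ψ (0, 1) with hQdef
  have hzero : Ψ ((Q.num * (P.den : ℤ)) • ((1, 0) : ℤ × ℤ)
      + (-(P.num * (Q.den : ℤ))) • ((0, 1) : ℤ × ℤ)) = 0 := by
    rw [map_add, map_zsmul, map_zsmul, zsmul_eq_mul, zsmul_eq_mul, ← hPdef, ← hQdef]
    push_cast
    have e1 := rat_den_mul P
    have e2 := rat_den_mul Q
    linear_combination (Q.num : ℚ) * e1 - (P.num : ℚ) * e2
  have harg := hΨinj (hzero.trans (map_zero Ψ).symm)
  have h1 : Q.num * (P.den : ℤ) = 0 := by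
    have := congrArg Prod.fst harg
    simpa using this
  have h2 : P.num * (Q.den : ℤ) = 0 := by
    have := congrArg Prod.snd harg
    simpa using this
  have hPden : (P.den : ℤ) ≠ 0 := by
    exact_mod_cast P.den_ne_zero
  have hQden : (Q.den : ℤ) ≠ 0 := by
    exact_mod_cast Q.den_ne_zero
  have hP0 : P = 0 := Rat.num_eq_zero.mp ((mul_eq_zero.mp h2).resolve_right hQden)
  have hfinal : ((1, 0) : ℤ × ℤ) = 0 := hΨinj (by rw [← hPdef, hP0, map_zero])
  simpa using hfinal
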